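/- arXiv:0807.4350 — 2 statements merged into one kernel-verified Lean document; each statement's English description precedes it below -/
import Mathlib

section
/- With notation as above, the image under the orthogonal projection π_Θ of any connected component C of the set of Π-regular elements of V (a Weyl chamber) is contained in a single connected component of the set of Θ-regular elements of a(Θ): indeed, π_Θ(C) is a convex set consisting of Θ-regular elements of a(Θ). -/
open scoped RealInnerProductSpace

/-- The image under `π_Θ` of a connected component `C` of the set of `Φ`-regular elements
(a Weyl chamber) is a convex set consisting of `Θ`-regular elements of `a(Θ)`; in particular
it is contained in a single connected component of the `Θ`-regular elements of `a(Θ)`. -/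
theorem stmt2
    {V : Type*} [NormedAddCommGroup V] [InnerProductSpace ℝ V] [FiniteDimensional ℝ V]
    (Φ : Finset (V →ₗ[ℝ] ℝ)) (hΦ : ∀ α ∈ Φ, α ≠ 0)
    (coroot : (V →ₗ[ℝ] ℝ) → V)
    (hcoroot : ∀ α ∈ Φ, ∀ H : V, ⟪coroot α, H⟫ = α H)
    (Θ : Finset (V →ₗ[ℝ] ℝ)) (hΘ : Θ ⊆ Φ)
    (C : Set V) (x₀ : V) (hx₀ : ∀ α ∈ Φ, α x₀ ≠ 0)
    (hC : C = connectedComponentIn {H : V | ∀ α ∈ Φ, α H ≠ 0} x₀)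
    (πΘ : V → V)
    (hπΘ : πΘ = fun H : V =>
      ((Submodule.orthogonalProjection (Submodule.span ℝ (coroot '' (Θ : Set (V →ₗ[ℝ] ℝ)))) H : V))) :
    Convex ℝ (πΘ '' C) ∧ ∀ y ∈ πΘ '' C, ∀ α ∈ Θ, α y ≠ 0 := by
  set K := Submodule.span ℝ (coroot '' (Θ : Set (V →ₗ[ℝ] ℝ))) with hK
  -- The chamber as an intersection of open half-spaces
  set S : Set V := ⋂ α ∈ Φ, {H : V | 0 < α x₀ * α H} with hS
  have hSconv : Convex ℝ S := by
    refine convex_iInter₂ fun α hα => ?_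
    have : {H : V | 0 < α x₀ * α H} = (α x₀ • α) ⁻¹' Set.Ioi (0:ℝ) := rfl
    rw [this]
    exact (convex_Ioi (0:ℝ)).linear_preimage _
  have hSopen : IsOpen S := by
    refine Set.Finite.isOpen_biInter Φ.finite_toSet fun α hα => ?_
    exact isOpen_lt continuous_const
      (continuous_const.mul α.continuous_of_finiteDimensional)
  have hSsub : S ⊆ {H : V | ∀ α ∈ Φ, α H ≠ 0} := by
    intro H hH α hα h0
    have : 0 < α x₀ * α H := Set.mem_iInter₂.1 hH α hα
    rw [h0, mul_zero] at this
    exact lt_irrefl _ this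
  have hx₀S : x₀ ∈ S :=
    Set.mem_iInter₂.2 fun α hα => mul_self_pos.2 (hx₀ α hα)
  -- C = S
  set S' : Set V := ⋃ α ∈ Φ, {H : V | α x₀ * α H < 0} with hS'
  have hS'open : IsOpen S' := by
    refine isOpen_biUnion fun α hα => ?_
    exact isOpen_lt (continuous_const.mul α.continuous_of_finiteDimensional) continuous_const
  have hdisj : Disjoint S S' := by
    rw [Set.disjoint_left]
    intro H hHS hHS'
    obtain ⟨α, hα, h⟩ := Set.mem_iUnion₂.1 hHS'
    have h1 : 0 < α x₀ * α H := Set.mem_iInter₂.1 hHS α hα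
    have h2 : α x₀ * α H < 0 := h
    exact absurd h1 (not_lt.2 h2.le)
  have hreg_sub : {H : V | ∀ α ∈ Φ, α H ≠ 0} ⊆ S ∪ S' := by
    intro H hH
    by_cases h : H ∈ S
    · exact Or.inl h
    · refine Or.inr ?_
      rw [hS, Set.mem_iInter₂] at h
      push_neg at h
      obtain ⟨α, hα, hle⟩ := h
      refine Set.mem_iUnion₂.2 ⟨α, hα, ?_⟩
      have hle' : ¬ (0 < α x₀ * α H) := hle
      have hne : α x₀ * α H ≠ 0 := mul_ne_zero (hx₀ α hα) (hH α hα)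
      exact lt_of_le_of_ne (not_lt.1 hle') hne
  have hCS : C = S := by
    apply Set.Subset.antisymm
    · rw [hC]
      have hconn : IsPreconnected (connectedComponentIn {H : V | ∀ α ∈ Φ, α H ≠ 0} x₀) :=
        (isConnected_connectedComponentIn_iff.2 (hSsub hx₀S)).isPreconnected
      exact hconn.subset_left_of_subset_union hSopen hS'open hdisj
        ((connectedComponentIn_subset _ _).trans hreg_sub)
        ⟨x₀, mem_connectedComponentIn (hSsub hx₀S), hx₀S⟩
    · rw [hC]
      exact hSconv.isPreconnected.subset_connectedComponentIn hx₀S hSsub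
  -- the projection as a linear map
  set L : V →ₗ[ℝ] V := K.subtype.comp (Submodule.orthogonalProjection K).toLinearMap with hL
  have hπL : πΘ = fun H => L H := by rw [hπΘ]; rfl
  constructor
  · rw [hCS, hπL]
    exact hSconv.linear_image L
  · rintro y ⟨H, hHC, rfl⟩ α hα
    have hHreg : ∀ β ∈ Φ, β H ≠ 0 := by
      have := connectedComponentIn_subset {H : V | ∀ α ∈ Φ, α H ≠ 0} x₀ (hC ▸ hHC)
      exact this
    have hmem : coroot α ∈ K := Submodule.subset_span ⟨α, hα, rfl⟩
    have key : α (πΘ H) = α H := by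
      rw [hπΘ]
      simp only
      rw [← hcoroot α (hΘ hα)]
      rw [← Submodule.starProjection_apply, ← Submodule.inner_starProjection_left_eq_right K]
      rw [Submodule.starProjection_eq_self_iff.2 hmem]
      exact hcoroot α (hΘ hα) H
    rw [key]
    exact hHreg α (hΘ hα)
end

section
/- Let Π be a root system in a finite-dimensional real inner product space V with a choice of positive roots Π^+ and simple roots Σ, and let Θ ⊆ Σ. Let a(Θ) = span{H_α : α ∈ Θ} and π_Θ the orthogonal projection onto a(Θ). Let w be an element of the Weyl group W and let a(Θ)^w be the chamber of the root subsystem generated by Θ in a(Θ) containing π_Θ(w·a^+), where a^+ is the fundamental chamber. Then every root α in the span of Θ that is positive on a(Θ)^w is positive on w·a^+; consequently, with n(Θ)^w = ⨁{g_α : α ∈ ⟨Θ⟩, α > 0 on a(Θ)^w} and n^+ = ⨁{g_α : α ∈ Π^+}, one has n(Θ)^w ⊆ w·n^+ in any Lie algebra g with root space decomposition for Π. -/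
open scoped RealInnerProductSpace

/-- Let `Φ` be a root system with positive system `Φ⁺` (with chamber `a⁺`), simple roots `Sg`,
`Θ ⊆ Sg`, and let `a(Θ)^w` be the chamber of the root subsystem `⟨Θ⟩` in `a(Θ)` containing
`π_Θ(w · a⁺)`.  Then every root in the span of `Θ` which is positive on `a(Θ)^w` is positive
on `w · a⁺`; consequently, in a Lie algebra with a compatible root space decomposition,
`n(Θ)^w ⊆ w · n⁺`. -/
theorem stmt8
    {V : Type*} [NormedAddCommGroup V] [InnerProductSpace ℝ V] [FiniteDimensional ℝ V]
    (Φ : Finset (V →ₗ[ℝ] ℝ)) (hΦ0 : ∀ α ∈ Φ, α ≠ 0)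
    (coroot : (V →ₗ[ℝ] ℝ) → V)
    (hcoroot : ∀ α ∈ Φ, ∀ H : V, ⟪coroot α, H⟫ = α H)
    (Φp Sg Θ : Finset (V →ₗ[ℝ] ℝ)) (hΦp : Φp ⊆ Φ) (hSg : Sg ⊆ Φp) (hΘ : Θ ⊆ Sg)
    (hpm : ∀ α ∈ Φ, α ∈ Φp ∨ -α ∈ Φp)
    -- the fundamental chamber `a⁺` and the characterization of positive roots
    (aplus : Set V) (haplus : aplus = {x : V | ∀ α ∈ Φp, 0 < α x})
    (x₀ : V) (hx₀ : x₀ ∈ aplus)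
    (hΦpos : ∀ α ∈ Φ, (α ∈ Φp ↔ ∀ x ∈ aplus, 0 < α x))
    -- the Weyl group element `w`, acting on roots by `α ↦ α ∘ w⁻¹`
    (w : V ≃ₗ[ℝ] V)
    (hstab : ∀ α ∈ Φ, α ∘ₗ (w : V →ₗ[ℝ] V) ∈ Φ)
    (hstab' : ∀ α ∈ Φ, α ∘ₗ (w.symm : V →ₗ[ℝ] V) ∈ Φ)
    -- the chamber `a(Θ)^w` of `⟨Θ⟩` in `a(Θ)` containing `π_Θ(w · a⁺)`
    (πΘ : V → V)
    (hπΘ : πΘ = fun H : V =>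
      ((Submodule.orthogonalProjectionOnto (Submodule.span ℝ (coroot '' (Θ : Set (V →ₗ[ℝ] ℝ)))) H : V)))
    (Cw : Set V) (y₀ : V)
    (hCw : Cw = connectedComponentIn
      {y : V | y ∈ Submodule.span ℝ (coroot '' (Θ : Set (V →ₗ[ℝ] ℝ))) ∧
        ∀ α ∈ Φ, (α ∈ Submodule.span ℝ (Θ : Set (V →ₗ[ℝ] ℝ)) → α y ≠ 0)} y₀)
    (hcont : πΘ '' (w '' aplus) ⊆ Cw)
    -- a Lie algebra with root space decomposition for `Φ`, on which `w` acts by `W`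
    {L : Type*} [LieRing L] [LieAlgebra ℝ L]
    (g : (V →ₗ[ℝ] ℝ) → Submodule ℝ L)
    (hsupp : ∀ α, α ∉ Φ → g α = ⊥)
    (W : L ≃ₗ[ℝ] L)
    (hW : ∀ α : V →ₗ[ℝ] ℝ,
      (g α).map (W : L →ₗ[ℝ] L) = g (α ∘ₗ (w.symm : V →ₗ[ℝ] V))) :
    (∀ α ∈ Φ, α ∈ Submodule.span ℝ (Θ : Set (V →ₗ[ℝ] ℝ)) →
      (∀ y ∈ Cw, 0 < α y) → ∀ x ∈ aplus, 0 < α (w x)) ∧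
    (⨆ α ∈ {α : V →ₗ[ℝ] ℝ | α ∈ Φ ∧ α ∈ Submodule.span ℝ (Θ : Set (V →ₗ[ℝ] ℝ)) ∧
        ∀ y ∈ Cw, 0 < α y}, g α)
      ≤ (⨆ α ∈ Φp, g α).map (W : L →ₗ[ℝ] L) := by

  set K := Submodule.span ℝ (coroot '' (Θ : Set (V →ₗ[ℝ] ℝ))) with hK
  -- every α in the span of Θ is represented by a vector in K
  have key : ∀ α : V →ₗ[ℝ] ℝ, α ∈ Submodule.span ℝ (Θ : Set (V →ₗ[ℝ] ℝ)) →
      ∃ u ∈ K, ∀ H : V, α H = ⟪u, H⟫ := by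
    intro α hα
    induction hα using Submodule.span_induction with
    | mem β hβ =>
      refine ⟨coroot β, Submodule.subset_span ⟨β, hβ, rfl⟩, fun H => ?_⟩
      exact (hcoroot β (hΦp (hSg (hΘ hβ))) H).symm
    | zero => exact ⟨0, K.zero_mem, fun H => by simp⟩
    | add β γ _ _ ihβ ihγ =>
      obtain ⟨u, hu, hβu⟩ := ihβ
      obtain ⟨v, hv, hγv⟩ := ihγ
      exact ⟨u + v, K.add_mem hu hv, fun H => by
        simp [LinearMap.add_apply, hβu H, hγv H, inner_add_left]⟩
    | smul c β _ ihβ =>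
      obtain ⟨u, hu, hβu⟩ := ihβ
      exact ⟨c • u, K.smul_mem c hu, fun H => by
        simp [LinearMap.smul_apply, hβu H, real_inner_smul_left]⟩
  -- inner products with vectors of K are preserved by the projection
  have hproj : ∀ u ∈ K, ∀ H : V, ⟪u, πΘ H⟫ = ⟪u, H⟫ := by
    intro u hu H
    rw [hπΘ]
    have horth : H - (Submodule.orthogonalProjectionOnto K H : V) ∈ Kᗮ :=
      Submodule.sub_starProjection_mem_orthogonal (K := K) H
    have := (Submodule.mem_orthogonal K _).1 horth u hu
    rw [inner_sub_right] at this
    simp only at this ⊢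
    linarith
  have part1 : ∀ α ∈ Φ, α ∈ Submodule.span ℝ (Θ : Set (V →ₗ[ℝ] ℝ)) →
      (∀ y ∈ Cw, 0 < α y) → ∀ x ∈ aplus, 0 < α (w x) := by
    intro α hαΦ hspan hpos x hx
    obtain ⟨u, hu, hαu⟩ := key α hspan
    have hmem : πΘ (w x) ∈ Cw :=
      hcont (Set.mem_image_of_mem _ (Set.mem_image_of_mem _ hx))
    have h1 : 0 < α (πΘ (w x)) := hpos _ hmem
    have h2 : α (πΘ (w x)) = α (w x) := by
      rw [hαu, hαu, hproj u hu]
    linarith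
  refine ⟨part1, ?_⟩
  refine iSup₂_le fun α hα => ?_
  obtain ⟨hαΦ, hspan, hpos⟩ := hα
  have hβΦ : α ∘ₗ (w : V →ₗ[ℝ] V) ∈ Φ := hstab α hαΦ
  have hβp : α ∘ₗ (w : V →ₗ[ℝ] V) ∈ Φp :=
    (hΦpos _ hβΦ).2 fun x hx => part1 α hαΦ hspan hpos x hx
  have hcomp : (α ∘ₗ (w : V →ₗ[ℝ] V)) ∘ₗ (w.symm : V →ₗ[ℝ] V) = α := by
    ext x; simp
  have hgα : g α = (g (α ∘ₗ (w : V →ₗ[ℝ] V))).map (W : L →ₗ[ℝ] L) := by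
    rw [hW, hcomp]
  rw [hgα]
  exact Submodule.map_mono (le_iSup₂ (f := fun β (_ : β ∈ Φp) => g β) _ hβp)
end
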